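/- In any instance of proxy selection with majority agreement (k = 0), let N' be the set of voters who intrinsically approve the optimal proposal win(P). Then max(|A(dRep0)|, |A(dRep1)|) ≥ |N'|/2, where dRep0 approves only win(P) and dRep1 approves every proposal; i.e., at least half of the voters in N' are attracted by one of these two dReps. -/
import Mathlib


open Finset

/-- An instance of proxy selection: `intrinsic i j` is voter `i`'s intrinsic approval of
proposal `j`; `visible i j` records whether this preference is revealed to the voter
(the revealed preference is `some (intrinsic i j)` if visible and `⊥` otherwise). -/
structure PSInstance (n m : ℕ) where
  intrinsic : Fin n → Fin m → Bool
  visible : Fin n → Fin m → Bool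

namespace PSInstance

variable {n m : ℕ}

/-- Revealed preference of voter `i` on proposal `j`. -/
def revealed (I : PSInstance n m) (i : Fin n) (j : Fin m) : Option Bool :=
  if I.visible i j then some (I.intrinsic i j) else none

/-- The revealed set `R_i` of voter `i`. -/
def Rset (I : PSInstance n m) (i : Fin n) : Finset (Fin m) :=
  univ.filter fun j => I.visible i j

/-- `m_i = |R_i|`. -/
def mi (I : PSInstance n m) (i : Fin n) : ℕ := (I.Rset i).card

/-- Hamming distance between voter `i`'s revealed ballot and type `t`, restricted to `R_i`. -/
def dist (I : PSInstance n m) (i : Fin n) (t : Fin m → Bool) : ℕ :=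
  (univ.filter fun j => I.visible i j ∧ I.intrinsic i j ≠ t j).card

/-- Voter `i` (with reluctance parameter `k`) is attracted by a dRep of type `t`. -/
def Attracted (I : PSInstance n m) (k : ℕ) (i : Fin n) (t : Fin m → Bool) : Prop :=
  I.dist i t ≤ (I.mi i - k) / 2

instance (I : PSInstance n m) (k : ℕ) (i : Fin n) (t : Fin m → Bool) :
    Decidable (I.Attracted k i t) := by unfold Attracted; exact inferInstance

/-- Intrinsic approval score of proposal `j`. -/
def sc (I : PSInstance n m) (j : Fin m) : ℕ :=
  (univ.filter fun i => I.intrinsic i j = true).card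

/-- Revealed approval score of proposal `j`. -/
def rsc (I : PSInstance n m) (j : Fin m) : ℕ :=
  (univ.filter fun i => I.visible i j ∧ I.intrinsic i j = true).card

/-- `j` is an intrinsically optimal proposal (`win(P)`). -/
def IsOpt (I : PSInstance n m) (j : Fin m) : Prop := ∀ j', I.sc j' ≤ I.sc j

/-- Total score of proposal `j` given a family `D` of dReps and a delegation assignment
`deleg` (delegating voters contribute through their dRep's ballot, the rest vote their
revealed preferences directly). -/
def totalScore {ι : Type} (I : PSInstance n m) (D : ι → Fin m → Bool)
    (deleg : Fin n → Option ι) (j : Fin m) : ℕ :=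
  (univ.filter fun i => (match deleg i with
    | some d => D d j
    | none => I.visible i j && I.intrinsic i j) = true).card

/-- A delegation assignment is valid (w.r.t. per-voter reluctance parameters `k`) if every
delegating voter is attracted by their chosen dRep, and every voter attracted by at least
one dRep delegates (to an arbitrary one of them). -/
def ValidDeleg {ι : Type} (I : PSInstance n m) (k : Fin n → ℕ) (D : ι → Fin m → Bool)
    (deleg : Fin n → Option ι) : Prop :=
  (∀ i d, deleg i = some d → I.Attracted (k i) i (D d)) ∧
  (∀ i, (∃ d, I.Attracted (k i) i (D d)) → deleg i ≠ none)

/-- `j` is elected: it maximizes total score, ties broken in favor of maximum intrinsic score. -/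
def Elected {ι : Type} (I : PSInstance n m) (D : ι → Fin m → Bool)
    (deleg : Fin n → Option ι) (j : Fin m) : Prop :=
  (∀ j', I.totalScore D deleg j' ≤ I.totalScore D deleg j) ∧
  (∀ j', I.totalScore D deleg j' = I.totalScore D deleg j → I.sc j' ≤ I.sc j)

/-- `j` is elected when ties are broken in favor of maximum *revealed* score. -/
def ElectedRev {ι : Type} (I : PSInstance n m) (D : ι → Fin m → Bool)
    (deleg : Fin n → Option ι) (j : Fin m) : Prop :=
  (∀ j', I.totalScore D deleg j' ≤ I.totalScore D deleg j) ∧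
  (∀ j', I.totalScore D deleg j' = I.totalScore D deleg j → I.rsc j' ≤ I.rsc j)

end PSInstance

/-- Under majority agreement, with `N'` the set of voters intrinsically
approving the optimal proposal, `max(|A(dRep0)|, |A(dRep1)|) ≥ |N'|/2`, where dRep0
approves only the optimal proposal and dRep1 approves everything. -/
theorem stmt12 (n m : ℕ) (I : PSInstance n m) (jopt : Fin m) (hopt : I.IsOpt jopt) :
    (Finset.univ.filter fun i => I.intrinsic i jopt = true).card ≤
      2 * max
        ((Finset.univ.filter fun i =>
          I.Attracted 0 i (fun j => decide (j = jopt))).card)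
        ((Finset.univ.filter fun i => I.Attracted 0 i (fun _ => true)).card) := by
  classical
  set A0 := Finset.univ.filter fun i =>
      I.Attracted 0 i (fun j => decide (j = jopt)) with hA0
  set A1 := Finset.univ.filter fun i => I.Attracted 0 i (fun _ => true) with hA1
  have hsub : (Finset.univ.filter fun i => I.intrinsic i jopt = true) ⊆ A0 ∪ A1 := by
    intro i hi
    simp only [mem_filter, mem_univ, true_and] at hi
    have hd : I.dist i (fun j => decide (j = jopt)) + I.dist i (fun _ => true) ≤ I.mi i := by
      unfold PSInstance.dist PSInstance.mi PSInstance.Rset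
      rw [← Finset.card_union_of_disjoint]
      · apply Finset.card_le_card
        intro j hj
        simp only [mem_union, mem_filter, mem_univ, true_and] at hj ⊢
        tauto
      · rw [Finset.disjoint_filter]
        intro j _ h1 h2
        simp only [ne_eq, Bool.not_eq_true] at h1 h2
        obtain ⟨_, h1b⟩ := h1
        rcases h2 with ⟨_, h2b⟩
        have : j = jopt := by
          by_contra hne
          simp [hne, h2b] at h1b
        subst this
        rw [hi] at h2b
        exact absurd h2b (by simp)
    have hmin : I.dist i (fun j => decide (j = jopt)) ≤ (I.mi i - 0) / 2 ∨
        I.dist i (fun _ => true) ≤ (I.mi i - 0) / 2 := by omega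
    simp only [mem_union, hA0, hA1, mem_filter, mem_univ, true_and]
    exact hmin
  calc (Finset.univ.filter fun i => I.intrinsic i jopt = true).card
      ≤ (A0 ∪ A1).card := Finset.card_le_card hsub
    _ ≤ A0.card + A1.card := Finset.card_union_le _ _
    _ ≤ 2 * max A0.card A1.card := by omega
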